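/- arXiv:2011.04643 — 10 statements merged into one kernel-verified Lean document; each statement's English description precedes it below -/
import Mathlib

section
/- Let θ, q be real numbers with 0 < θ < 1 and 0 < q < 1. For every nonnegative integer k, the series ∑_{i=k}^∞ C(i,k) q^k (1−q)^{i−k} · θ(1−θ)^i converges and equals (θ/(q+θ(1−q))) · ( q(1−θ)/(q+θ(1−q)) )^k. -/
/-- The `q`-thinning of a Geometric(`θ`) distribution: for every `k`, the series
`∑_{i=k}^∞ C(i,k) q^k (1-q)^{i-k} · θ(1-θ)^i` converges and equals
`(θ/(q+θ(1-q))) · (q(1-θ)/(q+θ(1-q)))^k`.  The series is reindexed by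
`i = k + j` with `j` ranging over `ℕ`. -/
theorem geometric_thinning (θ q : ℝ) (hθ0 : 0 < θ) (hθ1 : θ < 1)
    (hq0 : 0 < q) (hq1 : q < 1) (k : ℕ) :
    HasSum
      (fun j : ℕ =>
        ((k + j).choose k : ℝ) * q ^ k * (1 - q) ^ j * (θ * (1 - θ) ^ (k + j)))
      (θ / (q + θ * (1 - q)) * (q * (1 - θ) / (q + θ * (1 - q))) ^ k) := by
  have hr : ‖(1 - q) * (1 - θ)‖ < 1 := by
    rw [Real.norm_eq_abs, abs_of_nonneg (by nlinarith)]
    nlinarith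
  have H := (hasSum_choose_mul_geometric_of_norm_lt_one k hr).mul_left
    (q ^ k * (θ * (1 - θ) ^ k))
  have hd : 0 < q + θ * (1 - q) := by nlinarith
  convert H using 1
  · rfl
  · funext j
    rw [Nat.add_comm k j, pow_add, mul_pow]
    ring
  · have h1 : 1 - (1 - q) * (1 - θ) = q + θ * (1 - q) := by ring
    rw [h1, div_pow, mul_pow]
    field_simp
    ring
end

section
/- Let r ≥ 1 be a real number, 0 < q < 1, and let k ≥ 1 be an integer. Then the series ∑_{i=k}^∞ C(i,k) q^k (1−q)^{i−k} · i^{−(r+1)}/ζ(r+1) converges and equals (1/(ζ(r+1) k!)) · (q/(1−q))^k · ∑_{m=1}^{k} (−1)^{k−m} e_{k−m}(1,2,…,k−1) · Li_{r+1−m}(1−q), where e_j(1,…,k−1) denotes the elementary symmetric polynomial of degree j evaluated at 1,2,…,k−1 (with e_0 = 1). -/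
/-- The polylogarithm `Li_s(x) = ∑_{n=1}^∞ x^n n^{-s}` (real parameters);
the series converges for every real `s` whenever `|x| < 1`. -/
noncomputable def polylog (s x : ℝ) : ℝ :=
  ∑' n : ℕ, x ^ (n + 1) * ((n + 1 : ℝ)) ^ (-s)

/-- The Riemann zeta function for a real argument `s > 1`,
`ζ(s) = ∑_{n=1}^∞ n^{-s}`. -/
noncomputable def zetaReal (s : ℝ) : ℝ :=
  ∑' n : ℕ, ((n + 1 : ℝ)) ^ (-s)

/-- The elementary symmetric polynomial of degree `j` evaluated at the
elements of the finite set `s` of natural numbers (with `e_0 = 1`). -/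
noncomputable def esymEval (j : ℕ) (s : Finset ℕ) : ℝ :=
  ∑ t ∈ s.powersetCard j, ∏ x ∈ t, (x : ℝ)

lemma vieta_aux (s : Finset ℕ) (x : ℝ) :
    ∏ a ∈ s, (x - (a:ℝ)) =
      ∑ j ∈ Finset.range (s.card + 1), (-1:ℝ)^j * esymEval j s * x ^ (s.card - j) := by
  have h := congrArg (Polynomial.eval x)
    (Multiset.prod_X_sub_X_eq_sum_esymm (s.val.map (Nat.cast : ℕ → ℝ)))
  simp only [Polynomial.eval_multiset_prod, Multiset.map_map, Function.comp,
    Polynomial.eval_sub, Polynomial.eval_X, Polynomial.eval_C,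
    Polynomial.eval_finset_sum, Polynomial.eval_mul, Polynomial.eval_pow,
    Polynomial.eval_neg, Polynomial.eval_one, Multiset.card_map] at h
  rw [Finset.prod, h]
  refine Finset.sum_congr rfl fun j _ => ?_
  rw [Finset.esymm_map_val, esymEval, mul_assoc]
  rfl

lemma falling_aux (k : ℕ) (hk : 1 ≤ k) (x : ℝ) :
    ∏ t ∈ Finset.range k, (x - (t:ℝ)) =
      ∑ m ∈ Finset.Icc 1 k, (-1:ℝ)^(k-m) * esymEval (k-m) (Finset.Icc 1 (k-1)) * x^m := by
  have hins : Finset.range k = insert 0 (Finset.Icc 1 (k-1)) := by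
    ext t
    simp only [Finset.mem_range, Finset.mem_insert, Finset.mem_Icc]
    omega
  have hcard : (Finset.Icc 1 (k-1)).card = k - 1 := by
    rw [Nat.card_Icc]; omega
  rw [hins, Finset.prod_insert (by simp), vieta_aux, hcard]
  have hk1 : k - 1 + 1 = k := Nat.succ_pred_eq_of_pos hk
  rw [hk1, Finset.mul_sum]
  refine Finset.sum_nbij' (fun j => k - j) (fun m => k - m) ?_ ?_ ?_ ?_ ?_
  · intro j hj; simp at hj ⊢; omega
  · intro m hm; simp at hm ⊢; omega
  · intro j hj; simp at hj ⊢; omega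
  · intro m hm; simp at hm ⊢; omega
  · intro j hj
    simp only [Finset.mem_range] at hj
    have : k - (k - j) = j := by omega
    rw [this]
    have hx : (x - 0) * x ^ (k - 1 - j) = x ^ (k - j) := by
      rw [sub_zero, ← pow_succ']
      congr 1; omega
    ring_nf
    rw [← hx]
    ring

lemma polylog_hasSum {x : ℝ} (hx0 : 0 < x) (hx1 : x < 1) (s : ℝ) :
    HasSum (fun n : ℕ => x ^ (n + 1) * ((n + 1 : ℝ)) ^ (-s)) (polylog s x) := by
  have hs : Summable (fun n : ℕ => x ^ (n + 1) * ((n + 1 : ℝ)) ^ (-s)) := by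
    obtain ⟨K, hK⟩ : ∃ K : ℕ, -s ≤ K := ⟨⌈|s|⌉₊, by
      have := Nat.le_ceil |s|
      have := neg_abs_le s
      nlinarith [abs_nonneg s]⟩
    have hgeom : Summable (fun n : ℕ => ((n+1 : ℝ)) ^ K * x ^ (n+1)) := by
      have h := summable_pow_mul_geometric_of_norm_lt_one (R := ℝ) K
        (r := x) (by rw [Real.norm_eq_abs, abs_of_pos hx0]; exact hx1)
      have := (summable_nat_add_iff (f := fun n : ℕ => (n : ℝ) ^ K * x ^ n) 1).mpr h
      exact this.congr (by intro n; push_cast; ring)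
    refine Summable.of_nonneg_of_le (fun n => ?_) (fun n => ?_) hgeom
    · positivity
    · rw [mul_comm]
      refine mul_le_mul_of_nonneg_right ?_ (by positivity)
      calc ((n+1:ℝ)) ^ (-s) ≤ ((n+1:ℝ)) ^ (K : ℝ) :=
            Real.rpow_le_rpow_of_exponent_le (by linarith [Nat.cast_nonneg (α := ℝ) n]) hK
        _ = ((n+1:ℝ)) ^ K := Real.rpow_natCast _ K
  exact hs.hasSum

/-- For the Zeta(`r`) distribution `P_A(i) = i^{-(r+1)}/ζ(r+1)` (`i ≥ 1`) and `k ≥ 1`,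
the series `∑_{i=k}^∞ C(i,k) q^k (1-q)^{i-k} · i^{-(r+1)}/ζ(r+1)` converges and equals
`(1/(ζ(r+1) k!)) (q/(1-q))^k ∑_{m=1}^{k} (-1)^{k-m} e_{k-m}(1,…,k-1) Li_{r+1-m}(1-q)`.
The series is reindexed by `i = k + j` with `j` ranging over `ℕ`. -/
theorem zeta_thinning_pos (r q : ℝ) (hr : 1 ≤ r) (hq0 : 0 < q) (hq1 : q < 1)
    (k : ℕ) (hk : 1 ≤ k) :
    HasSum
      (fun j : ℕ =>
        ((k + j).choose k : ℝ) * q ^ k * (1 - q) ^ j *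
          (((k + j : ℕ) : ℝ) ^ (-(r + 1)) / zetaReal (r + 1)))
      (1 / (zetaReal (r + 1) * (Nat.factorial k : ℝ)) * (q / (1 - q)) ^ k *
        ∑ m ∈ Finset.Icc 1 k,
          (-1 : ℝ) ^ (k - m) * esymEval (k - m) (Finset.Icc 1 (k - 1)) *
            polylog (r + 1 - (m : ℝ)) (1 - q)) := by
  set x : ℝ := 1 - q with hxdef
  have hx0 : 0 < x := by simp [hxdef]; linarith
  have hx1 : x < 1 := by simp [hxdef]; linarith
  set c : ℕ → ℝ := fun m => (-1:ℝ)^(k-m) * esymEval (k-m) (Finset.Icc 1 (k-1)) with hc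
  set G : ℕ → ℝ := fun n =>
    ∑ m ∈ Finset.Icc 1 k, c m * (x ^ (n + 1) * ((n + 1 : ℝ)) ^ (-(r + 1 - (m:ℝ)))) with hG
  set T : ℝ := ∑ m ∈ Finset.Icc 1 k, c m * polylog (r + 1 - (m:ℝ)) x with hT
  have hGsum : HasSum G T := by
    refine hasSum_sum fun m _ => ?_
    exact (polylog_hasSum hx0 hx1 (r + 1 - (m:ℝ))).mul_left (c m)
  -- G n in closed form
  have hGform : ∀ n : ℕ, G n =
      x ^ (n + 1) * ((n + 1 : ℝ)) ^ (-(r + 1)) * ∏ t ∈ Finset.range k, (((n:ℝ) + 1) - t) := by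
    intro n
    rw [falling_aux k hk, Finset.mul_sum, hG]
    refine Finset.sum_congr rfl fun m hm => ?_
    have hb : (0:ℝ) < (n:ℝ) + 1 := by positivity
    have : ((n + 1 : ℝ)) ^ (-(r + 1 - (m:ℝ))) =
        ((n + 1 : ℝ)) ^ (-(r + 1)) * ((n:ℝ) + 1) ^ m := by
      rw [← Real.rpow_natCast ((n:ℝ)+1) m, ← Real.rpow_add hb]
      ring_nf
    rw [this]; ring
  -- first k-1 terms of G vanish
  have hGzero : ∀ i ∈ Finset.range (k - 1), G i = 0 := by
    intro i hi
    simp only [Finset.mem_range] at hi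
    rw [hGform]
    have hmem : i + 1 ∈ Finset.range k := Finset.mem_range.mpr (by omega)
    rw [Finset.prod_eq_zero hmem (by push_cast; ring)]
    ring
  have hshift : HasSum (fun j : ℕ => G (j + (k - 1))) T := by
    rw [hasSum_nat_add_iff (k - 1), Finset.sum_eq_zero hGzero, add_zero]
    exact hGsum
  have hzeta : 0 < zetaReal (r + 1) := by
    have hsum : Summable (fun n : ℕ => ((n + 1 : ℝ)) ^ (-(r + 1))) := by
      have h : Summable (fun n : ℕ => (n : ℝ) ^ (-(r + 1))) :=
        Real.summable_nat_rpow.mpr (by linarith)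
      have := (summable_nat_add_iff (f := fun n : ℕ => (n : ℝ) ^ (-(r + 1))) 1).mpr h
      exact this.congr (by intro n; push_cast; ring_nf)
    refine Summable.tsum_pos hsum (fun n => by positivity) 0 ?_
    norm_num
  set C0 : ℝ := 1 / (zetaReal (r + 1) * (Nat.factorial k : ℝ)) * (q / x) ^ k with hC0
  have hfinal := hshift.mul_left C0
  have hTval : C0 * T =
      1 / (zetaReal (r + 1) * (Nat.factorial k : ℝ)) * (q / x) ^ k *
        ∑ m ∈ Finset.Icc 1 k,
          (-1 : ℝ) ^ (k - m) * esymEval (k - m) (Finset.Icc 1 (k - 1)) *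
            polylog (r + 1 - (m : ℝ)) x := by
    rw [hT, hC0, Finset.mul_sum]
  rw [← hTval]
  refine hfinal.congr_fun fun j => ?_
  rw [hGform]
  have hcast : ((j + (k - 1) : ℕ) : ℝ) + 1 = ((k + j : ℕ) : ℝ) := by
    push_cast [Nat.cast_sub hk]; ring
  have hexp : j + (k - 1) + 1 = k + j := by omega
  rw [hexp, hcast]
  have hdesc : (((k + j).descFactorial k : ℕ) : ℝ) =
      ∏ t ∈ Finset.range k, (((k + j : ℕ) : ℝ) - (t : ℝ)) := by
    rw [Nat.descFactorial_eq_prod_range, Nat.cast_prod]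
    refine Finset.prod_congr rfl fun i hi => ?_
    rw [Nat.cast_sub (by simp only [Finset.mem_range] at hi; omega)]
  have hchoose : (((k + j).choose k : ℕ) : ℝ) * (Nat.factorial k : ℝ) =
      (((k + j).descFactorial k : ℕ) : ℝ) := by
    rw [← Nat.cast_mul, Nat.descFactorial_eq_factorial_mul_choose, mul_comm]
  have hfac : (0:ℝ) < (Nat.factorial k : ℝ) := by positivity
  have hxk : x ^ (k + j) = x ^ k * x ^ j := pow_add x k j
  rw [← hdesc, ← hchoose, hC0, hxk, div_pow]
  field_simp
end

section
/- Let θ, q be real numbers with 0 < θ < 1 and 0 < q < 1, and let k ≥ 1 be an integer. Then the series ∑_{i=k}^∞ C(i,k) q^k (1−q)^{i−k} · ( −θ^i/(i ln(1−θ)) ) converges and equals −(1/(k ln(1−θ))) · ( qθ/(1−θ(1−q)) )^k. -/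
/-- For the logarithmic series distribution `P_A(i) = -θ^i/(i ln(1-θ))` (`i ≥ 1`)
and `k ≥ 1`, the series `∑_{i=k}^∞ C(i,k) q^k (1-q)^{i-k} · (-θ^i/(i ln(1-θ)))`
converges and equals `-(1/(k ln(1-θ))) (qθ/(1-θ(1-q)))^k`.  The series is
reindexed by `i = k + j` with `j` ranging over `ℕ`. -/
theorem logSeries_thinning_pos (θ q : ℝ) (hθ0 : 0 < θ) (hθ1 : θ < 1)
    (hq0 : 0 < q) (hq1 : q < 1) (k : ℕ) (hk : 1 ≤ k) :
    HasSum
      (fun j : ℕ =>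
        ((k + j).choose k : ℝ) * q ^ k * (1 - q) ^ j *
          (-(θ ^ (k + j) / (((k + j : ℕ) : ℝ) * Real.log (1 - θ)))))
      (-(1 / ((k : ℝ) * Real.log (1 - θ))) * (q * θ / (1 - θ * (1 - q))) ^ k) := by
  obtain ⟨m, rfl⟩ : ∃ m, k = m + 1 := ⟨k - 1, by omega⟩
  set L := Real.log (1 - θ) with hL
  have hL0 : L < 0 := Real.log_neg (by linarith) (by linarith)
  have hLne : L ≠ 0 := ne_of_lt hL0
  set t : ℝ := θ * (1 - q) with htdef
  have ht0 : 0 < t := mul_pos hθ0 (by linarith)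
  have ht1 : t < 1 := by
    have : t < θ * 1 := mul_lt_mul_of_pos_left (by linarith) hθ0
    linarith
  have htn : ‖t‖ < 1 := by rw [Real.norm_eq_abs, abs_of_pos ht0]; exact ht1
  set c : ℝ := -(1 / (((m : ℝ) + 1) * L)) * (q * θ) ^ (m + 1) with hc
  have h := (hasSum_choose_mul_geometric_of_norm_lt_one m htn).mul_left c
  have h1t : (0 : ℝ) < 1 - t := by linarith
  have hfun : (fun j : ℕ =>
        ((m + 1 + j).choose (m + 1) : ℝ) * q ^ (m + 1) * (1 - q) ^ j *
          (-(θ ^ (m + 1 + j) / (((m + 1 + j : ℕ) : ℝ) * L))))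
      = fun j : ℕ => c * (((j + m).choose m : ℝ) * t ^ j) := by
    funext j
    have keyN : (m + j + 1) * (m + j).choose m = (m + 1 + j).choose (m + 1) * (m + 1) := by
      have := Nat.add_one_mul_choose_eq (m + j) m
      simpa [Nat.succ_eq_add_one, show m + j + 1 = m + 1 + j by omega] using this
    have hm1 : ((m : ℝ) + 1) ≠ 0 := by positivity
    have hN : (((m + 1 + j : ℕ) : ℝ)) ≠ 0 := Nat.cast_ne_zero.mpr (by omega)
    have hD : ((j + m).choose m : ℝ)
        = ((m + 1 + j).choose (m + 1) : ℝ) * ((m : ℝ) + 1) / ((m + 1 + j : ℕ) : ℝ) := by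
      rw [eq_div_iff hN]
      have h1 : ((m + j + 1 : ℕ) : ℝ) * ((m + j).choose m : ℝ)
          = ((m + 1 + j).choose (m + 1) : ℝ) * ((m + 1 : ℕ) : ℝ) := by exact_mod_cast keyN
      have h2 : (j + m).choose m = (m + j).choose m := by rw [Nat.add_comm]
      rw [h2]
      push_cast
      push_cast at h1
      linear_combination h1
    rw [hc, htdef, hD]
    simp only [mul_pow]
    field_simp
    ring
  have hval : c * (1 / (1 - t) ^ (m + 1))
      = -(1 / (((m + 1 : ℕ) : ℝ) * L)) * (q * θ / (1 - θ * (1 - q))) ^ (m + 1) := by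
    rw [div_pow, hc]
    push_cast
    rw [← htdef]
    ring
  rw [hfun, ← hval]
  exact h
end

section
/- Fix real numbers q ∈ (0,1], μ > 0, p ∈ (0,1), set m = (1+q)μ, and let 𝔹 : ℕ → ℝ. Suppose P : ℕ → ℝ satisfies P(0) = 𝔹(0)/(1+μ(1−p)) and, for k ≥ 1, P(k) = ((p(k−1)+m(1−p))/(1+q+pk+m(1−p))) P(k−1) + ((1+q)𝔹(k))/(1+q+pk+m(1−p)). Then for every k ≥ 0, P(k) = ( Γ(k + m(1−p)/p) / Γ(k + (1+q+p+m(1−p))/p) ) · ∑_{j=0}^{k} ( (1+q) Γ(j + (1+q+p+m(1−p))/p) / ( ((1+q)(1+μ(1−p)) + pj) · Γ(j + m(1−p)/p) ) ) · 𝔹(j), where Γ is the Gamma function. -/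
/-- Closed-form solution of the limit in-degree recurrence for `0 < p < 1`
(mixed attachment): if `P 0 = 𝔹 0/(1+μ(1-p))` and
`P k = ((p(k-1)+m(1-p))/(1+q+pk+m(1-p))) P (k-1) + (1+q)𝔹(k)/(1+q+pk+m(1-p))`
for `k ≥ 1`, where `m = (1+q)μ`, then
`P k = (Γ(k+m(1-p)/p)/Γ(k+(1+q+p+m(1-p))/p)) ·
  ∑_{j=0}^{k} ((1+q)Γ(j+(1+q+p+m(1-p))/p)/(((1+q)(1+μ(1-p))+pj)Γ(j+m(1-p)/p))) 𝔹(j)`. -/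
theorem limit_indegree_p_mid (q μ p m : ℝ) (hq0 : 0 < q) (hq1 : q ≤ 1) (hμ : 0 < μ)
    (hp0 : 0 < p) (hp1 : p < 1) (hm : m = (1 + q) * μ) (B P : ℕ → ℝ)
    (h0 : P 0 = B 0 / (1 + μ * (1 - p)))
    (hrec : ∀ k : ℕ, 1 ≤ k →
      P k = (p * ((k : ℝ) - 1) + m * (1 - p)) / (1 + q + p * k + m * (1 - p)) * P (k - 1)
        + (1 + q) * B k / (1 + q + p * k + m * (1 - p))) :
    ∀ k : ℕ, P k =
      Real.Gamma ((k : ℝ) + m * (1 - p) / p) /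
          Real.Gamma ((k : ℝ) + (1 + q + p + m * (1 - p)) / p) *
        ∑ j ∈ Finset.range (k + 1),
          (1 + q) * Real.Gamma ((j : ℝ) + (1 + q + p + m * (1 - p)) / p) /
              (((1 + q) * (1 + μ * (1 - p)) + p * j) *
                Real.Gamma ((j : ℝ) + m * (1 - p) / p)) * B j := by
  have hp : p ≠ 0 := ne_of_gt hp0
  have h1p : 0 < 1 - p := by linarith
  have h1q : (0:ℝ) < 1 + q := by linarith
  have hm0 : 0 < m := by rw [hm]; positivity
  set A : ℝ := m * (1 - p) / p with hA
  set C : ℝ := (1 + q + p + m * (1 - p)) / p with hC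
  have hApos : 0 < A := by rw [hA]; positivity
  have hCpos : 0 < C := by
    rw [hC]; apply div_pos _ hp0; nlinarith
  have hAk : ∀ n : ℕ, 0 < (n:ℝ) + A := fun n => by positivity
  have hCk : ∀ n : ℕ, 0 < (n:ℝ) + C := fun n => by positivity
  have hGA : ∀ n : ℕ, 0 < Real.Gamma ((n:ℝ) + A) :=
    fun n => Real.Gamma_pos_of_pos (hAk n)
  have hGC : ∀ n : ℕ, 0 < Real.Gamma ((n:ℝ) + C) :=
    fun n => Real.Gamma_pos_of_pos (hCk n)
  have hd0 : (0:ℝ) < 1 + μ * (1 - p) := by positivity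
  intro k
  induction k with
  | zero =>
    rw [h0]
    simp only [Nat.cast_zero, Nat.zero_add, Finset.sum_range_one, mul_zero, add_zero]
    have g1 := (hGA 0).ne'
    have g2 := (hGC 0).ne'
    simp only [Nat.cast_zero, zero_add] at g1 g2
    rw [zero_add, zero_add]
    field_simp
  | succ k ih =>
    have hrk := hrec (k + 1) (by omega)
    simp only [Nat.add_sub_cancel] at hrk
    rw [hrk]
    conv_rhs => rw [Finset.sum_range_succ]
    have e1 : ((k + 1 : ℕ) : ℝ) + A = ((k : ℝ) + A) + 1 := by push_cast; ring
    have e2 : ((k + 1 : ℕ) : ℝ) + C = ((k : ℝ) + C) + 1 := by push_cast; ring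
    rw [e1, e2, Real.Gamma_add_one (hAk k).ne', Real.Gamma_add_one (hCk k).ne']
    have hden : 1 + q + p * ((k + 1 : ℕ) : ℝ) + m * (1 - p) = p * ((k : ℝ) + C) := by
      push_cast; rw [hC]; field_simp; ring
    have hnum : p * (((k + 1 : ℕ) : ℝ) - 1) + m * (1 - p) = p * ((k : ℝ) + A) := by
      push_cast; rw [hA]; field_simp; ring
    have hden2 : (1 + q) * (1 + μ * (1 - p)) + p * ((k + 1 : ℕ) : ℝ) = p * ((k : ℝ) + C) := by
      push_cast; rw [hC, hm]; field_simp; ring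
    rw [hden, hnum, hden2, ih]
    have g1 := (hGA k).ne'
    have g2 := (hGC k).ne'
    have x1 := (hAk k).ne'
    have x2 := (hCk k).ne'
    field_simp
end

section
/- Fix a real number q ∈ (0,1], take p = 1, and let 𝔹 : ℕ → ℝ. Suppose P : ℕ → ℝ satisfies P(0) = 𝔹(0) and, for k ≥ 1, P(k) = ((k−1)/(1+q+k)) P(k−1) + (1+q)𝔹(k)/(1+q+k). Then for every k ≥ 1, P(k) = ( (1+q) Γ(k) / Γ(k+q+2) ) · ∑_{j=1}^{k} ( Γ(j+q+2) / ((j+q+1) Γ(j)) ) · 𝔹(j), where Γ is the Gamma function. -/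
/-- Closed-form solution of the limit in-degree recurrence for `p = 1`
(pure preferential attachment): if `P 0 = 𝔹 0` and
`P k = ((k-1)/(1+q+k)) P (k-1) + (1+q)𝔹(k)/(1+q+k)` for `k ≥ 1`, then for `k ≥ 1`,
`P k = ((1+q)Γ(k)/Γ(k+q+2)) ∑_{j=1}^{k} (Γ(j+q+2)/((j+q+1)Γ(j))) 𝔹(j)`. -/
theorem limit_indegree_p_one (q : ℝ) (hq0 : 0 < q) (hq1 : q ≤ 1) (B P : ℕ → ℝ)
    (h0 : P 0 = B 0)
    (hrec : ∀ k : ℕ, 1 ≤ k →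
      P k = ((k : ℝ) - 1) / (1 + q + k) * P (k - 1) + (1 + q) * B k / (1 + q + k)) :
    ∀ k : ℕ, 1 ≤ k →
      P k = (1 + q) * Real.Gamma (k : ℝ) / Real.Gamma ((k : ℝ) + q + 2) *
        ∑ j ∈ Finset.Icc 1 k,
          Real.Gamma ((j : ℝ) + q + 2) / (((j : ℝ) + q + 1) * Real.Gamma (j : ℝ)) * B j := by
  intro k hk
  induction k, hk using Nat.le_induction with
  | base =>
      have h1 := hrec 1 le_rfl
      simp only [Nat.cast_one] at h1 ⊢
      have hG3 : Real.Gamma (1 + q + 2) = 0 ∨ Real.Gamma (1 + q + 2) ≠ 0 := em _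
      have hGpos : 0 < Real.Gamma (1 + q + 2) := Real.Gamma_pos_of_pos (by linarith)
      have hd : (1 + q + 1 : ℝ) ≠ 0 := by linarith
      rw [h1]
      simp [Real.Gamma_one]
      field_simp
  | succ n hn ih =>
      have hGn : 0 < Real.Gamma (n : ℝ) := by
        apply Real.Gamma_pos_of_pos
        exact_mod_cast Nat.pos_of_ne_zero (by omega)
      have hGnq : 0 < Real.Gamma ((n : ℝ) + q + 2) := by
        apply Real.Gamma_pos_of_pos
        have : (0:ℝ) < n := by exact_mod_cast Nat.pos_of_ne_zero (by omega)
        linarith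
      have hrec' := hrec (n + 1) (by omega)
      have hstep : ((n : ℕ) + 1 - 1) = n := by omega
      rw [hstep] at hrec'
      push_cast at hrec'
      rw [hrec', ih]
      have hsum : ∑ j ∈ Finset.Icc 1 (n + 1),
          Real.Gamma ((j : ℝ) + q + 2) / (((j : ℝ) + q + 1) * Real.Gamma (j : ℝ)) * B j
          = (∑ j ∈ Finset.Icc 1 n,
          Real.Gamma ((j : ℝ) + q + 2) / (((j : ℝ) + q + 1) * Real.Gamma (j : ℝ)) * B j)
          + Real.Gamma (((n:ℝ)+1) + q + 2) / ((((n:ℝ)+1) + q + 1) * Real.Gamma ((n:ℝ)+1)) * B (n+1) := by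
        rw [Finset.sum_Icc_succ_top (by omega)]
        push_cast
        ring
      push_cast
      rw [hsum]
      -- Gamma recurrences
      have hG1 : Real.Gamma ((n:ℝ) + 1) = (n:ℝ) * Real.Gamma (n:ℝ) := by
        rw [Real.Gamma_add_one (by positivity)]
      have hG2 : Real.Gamma ((n:ℝ) + 1 + q + 2) = ((n:ℝ) + q + 2) * Real.Gamma ((n:ℝ) + q + 2) := by
        have : (n:ℝ) + 1 + q + 2 = ((n:ℝ) + q + 2) + 1 := by ring
        rw [this, Real.Gamma_add_one (by positivity)]
      rw [hG1, hG2]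
      have hnpos : (0:ℝ) < n := by exact_mod_cast Nat.pos_of_ne_zero (by omega)
      have hd1 : (1 + q + ((n:ℝ)+1)) ≠ 0 := by linarith
      have hd2 : ((n:ℝ) + q + 2) ≠ 0 := by linarith
      have hd3 : ((n:ℝ) + 1 + q + 1) ≠ 0 := by linarith
      field_simp
      ring
end

section
/- Fix real numbers q ∈ (0,1], μ > 0, set m = (1+q)μ, take p = 0, and let 𝔹 : ℕ → ℝ. Suppose P : ℕ → ℝ satisfies P(0) = 𝔹(0)/(1+μ) and, for k ≥ 1, P(k) = (m/(1+q+m)) P(k−1) + (1+q)𝔹(k)/(1+q+m). Define the complementary cumulative distribution F(k) = 1 − ∑_{i=0}^{k−1} P(i). Then for every k ≥ 1, F(k) = 1 − (1/(1+μ)) ∑_{i=0}^{k−1} ∑_{j=0}^{i} 𝔹(j) (μ/(1+μ))^{i−j}. -/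
/-- Closed form of the complementary cumulative in-degree distribution for `p = 0`:
with `P` satisfying the limit recurrence and `F k = 1 - ∑_{i=0}^{k-1} P i`, for
every `k ≥ 1`, `F k = 1 - (1/(1+μ)) ∑_{i=0}^{k-1} ∑_{j=0}^{i} 𝔹(j) (μ/(1+μ))^{i-j}`. -/
theorem ccdf_p_zero (q μ m : ℝ) (hq0 : 0 < q) (hq1 : q ≤ 1) (hμ : 0 < μ)
    (hm : m = (1 + q) * μ) (B P : ℕ → ℝ)
    (h0 : P 0 = B 0 / (1 + μ))
    (hrec : ∀ k : ℕ, 1 ≤ k →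
      P k = m / (1 + q + m) * P (k - 1) + (1 + q) * B k / (1 + q + m))
    (F : ℕ → ℝ) (hF : ∀ k : ℕ, F k = 1 - ∑ i ∈ Finset.range k, P i) :
    ∀ k : ℕ, 1 ≤ k →
      F k = 1 - (1 / (1 + μ)) *
        ∑ i ∈ Finset.range k, ∑ j ∈ Finset.range (i + 1),
          B j * (μ / (1 + μ)) ^ (i - j) := by
  have hμ1 : (1 : ℝ) + μ ≠ 0 := by positivity
  have hq1' : (1 : ℝ) + q ≠ 0 := by positivity
  have hqm : 1 + q + m = (1 + q) * (1 + μ) := by rw [hm]; ring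
  have hqm0 : (1 : ℝ) + q + m ≠ 0 := by rw [hqm]; positivity
  have key : ∀ i : ℕ, P i = (1 / (1 + μ)) *
      ∑ j ∈ Finset.range (i + 1), B j * (μ / (1 + μ)) ^ (i - j) := by
    intro i
    induction i with
    | zero => simp [h0]; ring
    | succ n ih =>
      have hr := hrec (n + 1) (Nat.le_add_left 1 n)
      simp only [Nat.add_sub_cancel] at hr
      rw [hr, Finset.sum_range_succ]
      have hstep : ∀ j ∈ Finset.range (n + 1),
          B j * (μ / (1 + μ)) ^ (n + 1 - j) =
          (μ / (1 + μ)) * (B j * (μ / (1 + μ)) ^ (n - j)) := by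
        intro j hj
        have hjn : j ≤ n := Nat.lt_succ_iff.mp (Finset.mem_range.mp hj)
        have : n + 1 - j = (n - j) + 1 := by omega
        rw [this, pow_succ]; ring
      rw [Finset.sum_congr rfl hstep, ih, ← Finset.mul_sum]
      set S := ∑ j ∈ Finset.range (n + 1), B j * (μ / (1 + μ)) ^ (n - j) with hS
      simp only [Nat.sub_self, pow_zero, mul_one]
      rw [hqm, hm]
      field_simp
  intro k hk
  rw [hF k]
  congr 1
  rw [Finset.mul_sum]
  exact Finset.sum_congr rfl fun i _ => key i
end

section
/- Fix real numbers q ∈ (0,1], μ > 0, p ∈ (0,1), set m = (1+q)μ, and let 𝔹 : ℕ → ℝ. Suppose P : ℕ → ℝ satisfies P(0) = 𝔹(0)/(1+μ(1−p)) and, for k ≥ 1, P(k) = ((p(k−1)+m(1−p))/(1+q+pk+m(1−p))) P(k−1) + ((1+q)𝔹(k))/(1+q+pk+m(1−p)). Define F(k) = 1 − ∑_{i=0}^{k−1} P(i). Then for every k ≥ 1, F(k) = 1 − ∑_{i=0}^{k−1} ∑_{j=0}^{i} ( (1+q) B(i + m(1−p)/p, (1+q+p)/p) / ( (1+q+pj+m(1−p))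 · B(j + m(1−p)/p, (1+q+p)/p) ) ) · 𝔹(j), where B(x,y) = Γ(x)Γ(y)/Γ(x+y) denotes the Beta function. -/
/-- The Beta function `B(x,y) = Γ(x)Γ(y)/Γ(x+y)`. -/
noncomputable def betaFn (x y : ℝ) : ℝ :=
  Real.Gamma x * Real.Gamma y / Real.Gamma (x + y)

lemma betaFn_pos {x y : ℝ} (hx : 0 < x) (hy : 0 < y) : 0 < betaFn x y := by
  unfold betaFn
  exact div_pos (mul_pos (Real.Gamma_pos_of_pos hx) (Real.Gamma_pos_of_pos hy))
    (Real.Gamma_pos_of_pos (by linarith))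

lemma betaFn_succ {x y : ℝ} (hx : 0 < x) (hy : 0 < y) :
    betaFn (x + 1) y = x / (x + y) * betaFn x y := by
  unfold betaFn
  rw [Real.Gamma_add_one hx.ne', show x + 1 + y = (x + y) + 1 by ring,
    Real.Gamma_add_one (by positivity)]
  have h1 := (Real.Gamma_pos_of_pos (show (0:ℝ) < x + y by linarith)).ne'
  have h2 : x + y ≠ 0 := by positivity
  field_simp

/-- Closed form of the complementary cumulative in-degree distribution for
`0 < p < 1`: with `P` satisfying the limit recurrence and
`F k = 1 - ∑_{i=0}^{k-1} P i`, for every `k ≥ 1`,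
`F k = 1 - ∑_{i=0}^{k-1} ∑_{j=0}^{i}
  ((1+q)B(i+m(1-p)/p,(1+q+p)/p)/((1+q+pj+m(1-p))B(j+m(1-p)/p,(1+q+p)/p))) 𝔹(j)`. -/
theorem ccdf_p_mid (q μ p m : ℝ) (hq0 : 0 < q) (hq1 : q ≤ 1) (hμ : 0 < μ)
    (hp0 : 0 < p) (hp1 : p < 1) (hm : m = (1 + q) * μ) (B P : ℕ → ℝ)
    (h0 : P 0 = B 0 / (1 + μ * (1 - p)))
    (hrec : ∀ k : ℕ, 1 ≤ k →
      P k = (p * ((k : ℝ) - 1) + m * (1 - p)) / (1 + q + p * k + m * (1 - p)) * P (k - 1)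
        + (1 + q) * B k / (1 + q + p * k + m * (1 - p)))
    (F : ℕ → ℝ) (hF : ∀ k : ℕ, F k = 1 - ∑ i ∈ Finset.range k, P i) :
    ∀ k : ℕ, 1 ≤ k →
      F k = 1 -
        ∑ i ∈ Finset.range k, ∑ j ∈ Finset.range (i + 1),
          (1 + q) * betaFn ((i : ℝ) + m * (1 - p) / p) ((1 + q + p) / p) /
              ((1 + q + p * j + m * (1 - p)) *
                betaFn ((j : ℝ) + m * (1 - p) / p) ((1 + q + p) / p)) * B j := by
  obtain ⟨a, ha_def⟩ : ∃ x : ℝ, x = m * (1 - p) / p := ⟨_, rfl⟩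
  obtain ⟨b, hb_def⟩ : ∃ x : ℝ, x = (1 + q + p) / p := ⟨_, rfl⟩
  have hm0 : 0 < m := by rw [hm]; nlinarith
  have ha : 0 < a := by
    rw [ha_def]
    have : 0 < 1 - p := by linarith
    positivity
  have hb : 0 < b := by
    rw [hb_def]
    have : 0 < 1 + q + p := by linarith
    positivity
  have hden : ∀ j : ℕ, 1 + q + p * j + m * (1 - p) = p * ((j : ℝ) + a + b - 1) := by
    intro j
    rw [ha_def, hb_def]
    field_simp
    ring
  have hdenpos : ∀ j : ℕ, 0 < 1 + q + p * j + m * (1 - p) := by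
    intro j
    have : (0:ℝ) ≤ p * j := by positivity
    nlinarith
  have hβpos : ∀ j : ℕ, 0 < betaFn ((j : ℝ) + a) b := fun j =>
    betaFn_pos (by positivity) hb
  have key : ∀ i : ℕ, P i = ∑ j ∈ Finset.range (i + 1),
      (1 + q) * betaFn ((i : ℝ) + a) b /
        ((1 + q + p * j + m * (1 - p)) * betaFn ((j : ℝ) + a) b) * B j := by
    intro i
    induction i with
    | zero =>
      simp only [zero_add, Finset.sum_range_one, Nat.cast_zero, mul_zero, add_zero]
      have hβ := (hβpos 0).ne'
      simp only [Nat.cast_zero, zero_add] at hβ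
      have hq' : (1 + q : ℝ) ≠ 0 := by linarith
      rw [h0, show 1 + q + m * (1 - p) = (1 + q) * (1 + μ * (1 - p)) by rw [hm]; ring]
      symm
      rw [mul_comm ((1 + q) * (1 + μ * (1 - p))) (betaFn a b), ← div_div,
        mul_div_cancel_right₀ _ hβ, div_mul_eq_mul_div, mul_div_mul_left _ _ hq']
    | succ n ih =>
      have hr := hrec (n + 1) (Nat.le_add_left 1 n)
      simp only [Nat.add_sub_cancel] at hr
      have hcast : ((n + 1 : ℕ) : ℝ) = (n : ℝ) + 1 := by push_cast; ring
      rw [hr, ih, Finset.sum_range_succ (n := n + 1)]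
      have hβsucc : betaFn (((n + 1 : ℕ) : ℝ) + a) b =
          ((n : ℝ) + a) / ((n : ℝ) + a + b) * betaFn ((n : ℝ) + a) b := by
        rw [hcast, show (n : ℝ) + 1 + a = ((n : ℝ) + a) + 1 by ring,
          betaFn_succ (by positivity) hb]
      have hcoef : (p * (((n + 1 : ℕ) : ℝ) - 1) + m * (1 - p)) /
          (1 + q + p * ((n + 1 : ℕ) : ℝ) + m * (1 - p)) =
          ((n : ℝ) + a) / ((n : ℝ) + a + b) := by
        have hd := hden (n + 1)
        push_cast at hd ⊢
        rw [hd]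
        have hnum : p * ((n : ℝ) + 1 - 1) + m * (1 - p) = p * ((n : ℝ) + a) := by
          rw [ha_def]; field_simp; ring
        rw [hnum, mul_div_mul_left _ _ hp0.ne']
        congr 1
        ring
      rw [hcoef, Finset.mul_sum]
      have hsum : ∀ j ∈ Finset.range (n + 1),
          ((n : ℝ) + a) / ((n : ℝ) + a + b) *
            ((1 + q) * betaFn ((n : ℝ) + a) b /
              ((1 + q + p * j + m * (1 - p)) * betaFn ((j : ℝ) + a) b) * B j) =
          (1 + q) * betaFn (((n + 1 : ℕ) : ℝ) + a) b /
            ((1 + q + p * j + m * (1 - p)) * betaFn ((j : ℝ) + a) b) * B j := by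
        intro j hj
        rw [hβsucc]
        ring
      have hlast : (1 + q) * betaFn (((n + 1 : ℕ) : ℝ) + a) b /
            ((1 + q + p * ((n + 1 : ℕ) : ℝ) + m * (1 - p)) *
              betaFn (((n + 1 : ℕ) : ℝ) + a) b) * B (n + 1) =
          (1 + q) * B (n + 1) / (1 + q + p * ((n + 1 : ℕ) : ℝ) + m * (1 - p)) := by
        have hβ' := (hβpos (n + 1)).ne'
        rw [mul_comm (1 + q + p * ((n + 1 : ℕ) : ℝ) + m * (1 - p))
            (betaFn (((n + 1 : ℕ) : ℝ) + a) b), ← div_div,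
          mul_div_cancel_right₀ _ hβ', div_mul_eq_mul_div]
      rw [Finset.sum_congr rfl hsum, ← hlast]
  intro k hk
  rw [hF k]
  congr 1
  refine Finset.sum_congr rfl fun i _ => ?_
  rw [key i, ha_def, hb_def]
end

section
/- Fix a real number q ∈ (0,1], take p = 1, and let 𝔹 : ℕ → ℝ. Suppose P : ℕ → ℝ satisfies P(0) = 𝔹(0) and, for k ≥ 1, P(k) = ((k−1)/(1+q+k)) P(k−1) + (1+q)𝔹(k)/(1+q+k). Define F(k) = 1 − ∑_{i=0}^{k−1} P(i). Then for every k ≥ 1, F(k) = 1 − 𝔹(0) − ∑_{i=1}^{k−1} ∑_{j=1}^{i} ( (1+q) B(i, q+2) / ((j+q+1) B(j, q+2)) ) · 𝔹(j), where B(x,y) = Γ(x)Γ(y)/Γ(x+y) denotes the Beta function. -/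
/-- Closed form of the complementary cumulative in-degree distribution for
`p = 1` (pure preferential attachment): with `P` satisfying the limit recurrence
and `F k = 1 - ∑_{i=0}^{k-1} P i`, for every `k ≥ 1`,
`F k = 1 - 𝔹(0) - ∑_{i=1}^{k-1} ∑_{j=1}^{i}
  ((1+q)B(i,q+2)/((j+q+1)B(j,q+2))) 𝔹(j)`. -/
theorem ccdf_p_one (q : ℝ) (hq0 : 0 < q) (hq1 : q ≤ 1) (B P : ℕ → ℝ)
    (h0 : P 0 = B 0)
    (hrec : ∀ k : ℕ, 1 ≤ k →
      P k = ((k : ℝ) - 1) / (1 + q + k) * P (k - 1) + (1 + q) * B k / (1 + q + k))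
    (F : ℕ → ℝ) (hF : ∀ k : ℕ, F k = 1 - ∑ i ∈ Finset.range k, P i) :
    ∀ k : ℕ, 1 ≤ k →
      F k = 1 - B 0 -
        ∑ i ∈ Finset.Icc 1 (k - 1), ∑ j ∈ Finset.Icc 1 i,
          (1 + q) * betaFn (i : ℝ) (q + 2) /
              (((j : ℝ) + q + 1) * betaFn (j : ℝ) (q + 2)) * B j := by
  have hq2 : (0:ℝ) < q + 2 := by linarith
  -- closed form of P
  have hP : ∀ i : ℕ, 1 ≤ i → P i = ∑ j ∈ Finset.Icc 1 i,
      (1 + q) * betaFn (i : ℝ) (q + 2) /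
        (((j : ℝ) + q + 1) * betaFn (j : ℝ) (q + 2)) * B j := by
    intro i hi
    induction i with
    | zero => omega
    | succ n ih =>
      rcases Nat.eq_or_lt_of_le hi with h1 | h1
      · -- n + 1 = 1
        have hn : n = 0 := by omega
        subst hn
        have := hrec 1 le_rfl
        simp only [Nat.cast_one] at this
        rw [this]
        have hb : betaFn (1 : ℝ) (q + 2) ≠ 0 := (betaFn_pos one_pos hq2).ne'
        simp only [Finset.Icc_self, Finset.sum_singleton, Nat.cast_one]
        rw [h0]
        field_simp
        ring
      · -- n ≥ 1
        have hn : 1 ≤ n := by omega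
        have ihn := ih hn
        have hrec' := hrec (n + 1) (by omega)
        simp only [Nat.add_sub_cancel, Nat.cast_add, Nat.cast_one] at hrec'
        have hbsucc : betaFn ((n : ℝ) + 1) (q + 2)
            = (n : ℝ) / ((n : ℝ) + (q + 2)) * betaFn (n : ℝ) (q + 2) := by
          exact betaFn_succ (by exact_mod_cast hn) hq2
        have hnq : ((n : ℝ) + (q + 2)) ≠ 0 := by positivity
        have hnq2 : (1 + q + ((n : ℝ) + 1)) ≠ 0 := by positivity
        rw [hrec', ihn, Finset.sum_Icc_succ_top (by omega : 1 ≤ n + 1), Finset.mul_sum]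
        congr 1
        · refine Finset.sum_congr rfl fun j hj => ?_
          simp only [Finset.mem_Icc] at hj
          have hbj : betaFn (j : ℝ) (q + 2) ≠ 0 := by
            have : (0:ℝ) < (j : ℝ) := by exact_mod_cast hj.1
            exact (betaFn_pos this hq2).ne'
          have hjq : ((j : ℝ) + q + 1) ≠ 0 := by positivity
          push_cast
          rw [hbsucc]
          field_simp
          ring
        · have hbn1 : betaFn ((n : ℝ) + 1) (q + 2) ≠ 0 :=
            (betaFn_pos (by positivity) hq2).ne'
          have hn0 : (n : ℝ) ≠ 0 := by
            have : (0:ℝ) < (n : ℝ) := by exact_mod_cast hn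
            exact this.ne'
          have hbn : betaFn (n : ℝ) (q + 2) ≠ 0 := by
            have : (0:ℝ) < (n : ℝ) := by exact_mod_cast hn
            exact (betaFn_pos this hq2).ne'
          push_cast
          rw [hbsucc]
          field_simp
          ring
  intro k hk
  rw [hF k]
  have hsplit : ∑ i ∈ Finset.range k, P i = P 0 + ∑ i ∈ Finset.Icc 1 (k - 1), P i := by
    have h1 : Finset.Ico 1 k = Finset.Icc 1 (k - 1) := by
      ext x; simp only [Finset.mem_Ico, Finset.mem_Icc]; omega
    rw [Finset.range_eq_Ico,
      ← Finset.sum_Ico_consecutive _ (by omega : 0 ≤ 1) (by omega : 1 ≤ k), h1]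
    simp
  rw [hsplit, h0]
  rw [Finset.sum_congr rfl fun i hi => hP i (Finset.mem_Icc.mp hi).1]
  ring
end

section
/- Let c > 0 and b be real numbers and n₀ ≥ 1 an integer. Suppose (x_t)_{t≥0} is a real sequence satisfying x_t = (1 − c/(n₀+t)) x_{t−1} + b/(n₀+t) for all t ≥ 1. Then x_t → b/c as t → ∞, regardless of the initial value x_0. -/
open Filter

/-- Base case of Theorem 3.2: if `x_t = (1 - c/(n₀+t)) x_{t-1} + b/(n₀+t)`
for all `t ≥ 1`, with `c > 0` and integer `n₀ ≥ 1`, then `x_t → b/c` as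
`t → ∞`, regardless of the initial value `x_0`. -/
theorem recurrence_limit_base (c b : ℝ) (hc : 0 < c) (n₀ : ℕ) (hn₀ : 1 ≤ n₀)
    (x : ℕ → ℝ)
    (h : ∀ t : ℕ, 1 ≤ t →
      x t = (1 - c / ((n₀ : ℝ) + t)) * x (t - 1) + b / ((n₀ : ℝ) + t)) :
    Tendsto x atTop (nhds (b / c)) := by
  set N := ⌈c⌉₊ with hNdef
  have hcN : c ≤ (N : ℝ) := Nat.le_ceil c
  -- the basic one-step recurrence for the error term
  have key : ∀ t : ℕ, x (t + 1) - b / c =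
      (1 - c / ((n₀ : ℝ) + t + 1)) * (x t - b / c) := by
    intro t
    have hm : (0 : ℝ) < (n₀ : ℝ) + t + 1 := by positivity
    have ht := h (t + 1) (by omega)
    simp only [Nat.add_sub_cancel, Nat.cast_add, Nat.cast_one] at ht
    rw [show (n₀ : ℝ) + (t + 1) = (n₀ : ℝ) + t + 1 by ring] at ht
    rw [ht]
    field_simp
    ring
  -- denominator function
  set f : ℕ → ℝ := fun k => (n₀ : ℝ) + (N + k) + 1 with hfdef
  clear_value f
  have hfpos : ∀ k, (0 : ℝ) < f k := by
    intro k
    simp only [hfdef]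
    positivity
  have hcf : ∀ k, c ≤ f k := by
    intro k
    refine hcN.trans ?_
    simp only [hfdef]
    push_cast
    have : (0:ℝ) ≤ (n₀:ℝ) := Nat.cast_nonneg _
    nlinarith [Nat.cast_nonneg (α := ℝ) k]
  -- the inductive bound
  have bound : ∀ k : ℕ, |x (N + k) - b / c| ≤
      |x N - b / c| * Real.exp (-(c * ∑ i ∈ Finset.range k, 1 / f i)) := by
    intro k
    induction k with
    | zero => simp
    | succ k ih =>
      have hk := key (N + k)
      have hcast : ((N + k : ℕ) : ℝ) = (N : ℝ) + k := Nat.cast_add N k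
      rw [show N + (k + 1) = (N + k) + 1 by ring, hk, hcast]
      have hfk : (n₀ : ℝ) + ((N : ℝ) + (k : ℝ)) + 1 = f k := by
        simp only [hfdef]
      rw [abs_mul, hfk]
      have h0 : 0 ≤ 1 - c / f k := by
        rw [sub_nonneg, div_le_one (hfpos k)]
        exact hcf k
      have h1 : 1 - c / f k ≤ Real.exp (-(c / f k)) := by
        have := Real.add_one_le_exp (-(c / f k))
        linarith
      rw [abs_of_nonneg h0]
      calc (1 - c / f k) * |x (N + k) - b / c|
          ≤ Real.exp (-(c / f k)) *
            (|x N - b / c| * Real.exp (-(c * ∑ i ∈ Finset.range k, 1 / f i))) := by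
            apply mul_le_mul h1 ih (abs_nonneg _)
            positivity
        _ = |x N - b / c| *
            Real.exp (-(c * ∑ i ∈ Finset.range (k + 1), 1 / f i)) := by
            rw [Finset.sum_range_succ, mul_add, neg_add, Real.exp_add, mul_one_div]
            ring
  -- the sum diverges
  have hsum : Tendsto (fun k => ∑ i ∈ Finset.range k, 1 / f i) atTop atTop := by
    set M : ℝ := (n₀ : ℝ) + N + 1 with hMdef
    have hM : (0 : ℝ) < M := by simp only [hMdef]; positivity
    have hcmp : ∀ k : ℕ, (1 / M) * (∑ i ∈ Finset.range k, (1 / (i + 1) : ℝ)) ≤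
        ∑ i ∈ Finset.range k, 1 / f i := by
      intro k
      rw [Finset.mul_sum]
      apply Finset.sum_le_sum
      intro i _
      have hle : f i ≤ M * ((i : ℝ) + 1) := by
        simp only [hfdef, hMdef]
        have h1 : (1 : ℝ) ≤ (n₀ : ℝ) := Nat.one_le_cast.2 hn₀
        nlinarith [Nat.cast_nonneg (α := ℝ) i, Nat.cast_nonneg (α := ℝ) N]
      calc (1 / M) * (1 / ((i : ℝ) + 1)) = 1 / (M * ((i : ℝ) + 1)) := by
            rw [one_div_mul_one_div]
        _ ≤ 1 / f i := one_div_le_one_div_of_le (hfpos i) hle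
    refine tendsto_atTop_mono hcmp ?_
    exact (Real.tendsto_sum_range_one_div_nat_succ_atTop).const_mul_atTop (by positivity)
  -- exponential bound tends to zero
  have hexp : Tendsto (fun k => |x N - b / c| *
      Real.exp (-(c * ∑ i ∈ Finset.range k, 1 / f i))) atTop (nhds 0) := by
    rw [show (0 : ℝ) = |x N - b / c| * 0 by ring]
    apply Tendsto.const_mul
    apply Real.tendsto_exp_atBot.comp
    rw [tendsto_neg_atBot_iff]
    exact hsum.const_mul_atTop hc
  -- squeeze
  have habs : Tendsto (fun k => |x (N + k) - b / c|) atTop (nhds 0) :=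
    squeeze_zero (fun k => abs_nonneg _) bound hexp
  have hz : Tendsto (fun k => x (N + k) - b / c) atTop (nhds 0) :=
    (tendsto_zero_iff_abs_tendsto_zero _).2 habs
  have hx : Tendsto (fun k => x (N + k)) atTop (nhds (b / c)) := by
    have := hz.add_const (b / c)
    simpa using this
  have hx' : Tendsto (fun k => x (k + N)) atTop (nhds (b / c)) := by
    convert hx using 2 with k
    ring_nf
  exact (tendsto_add_atTop_iff_nat N).1 hx'
end

section
/- Let (a_t)_{t≥1} and (b_t)_{t≥1} be real sequences with a_t → a for some a > 0 and b_t → b. Suppose (x_t)_{t≥0} is a real sequence satisfying x_t = (1 − a_t/t) x_{t−1} + b_t/t for all t ≥ 1. Then x_t → b/a as t → ∞, regardless of the initial value x_0. -/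
open Filter

set_option maxHeartbeats 2000000 in
/-- Asymptotic lemma for the inductive step of Theorem 3.2 (analogue of
Lemma 2 of Ruiz 2018): if `a_t → a > 0`, `b_t → b`, and
`x_t = (1 - a_t/t) x_{t-1} + b_t/t` for all `t ≥ 1`, then `x_t → b/a`,
regardless of the initial value `x_0`. -/
theorem recurrence_limit_general (a b : ℝ) (ha : 0 < a) (aseq bseq : ℕ → ℝ)
    (hA : Tendsto aseq atTop (nhds a)) (hB : Tendsto bseq atTop (nhds b))
    (x : ℕ → ℝ)
    (h : ∀ t : ℕ, 1 ≤ t →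
      x t = (1 - aseq t / (t : ℝ)) * x (t - 1) + bseq t / (t : ℝ)) :
    Tendsto x atTop (nhds (b / a)) := by
  set L : ℝ := b / a with hLdef
  set y : ℕ → ℝ := fun t => x t - L with hydef
  suffices hy : Tendsto y atTop (nhds 0) by
    have := hy.add_const L
    simp only [zero_add] at this
    refine this.congr (fun t => by simp [hydef])
  set c : ℕ → ℝ := fun t => bseq t - aseq t * L with hcdef
  have hcz : Tendsto c atTop (nhds 0) := by
    have h1 : Tendsto c atTop (nhds (b - a * L)) :=
      hB.sub (hA.mul tendsto_const_nhds)
    have : b - a * L = 0 := by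
      rw [hLdef, mul_div_assoc', mul_comm a b, mul_div_assoc, div_self ha.ne', mul_one, sub_self]
    rwa [this] at h1
  have hrec : ∀ t : ℕ, y (t + 1) =
      (1 - aseq (t + 1) / ((t : ℝ) + 1)) * y t + c (t + 1) / ((t : ℝ) + 1) := by
    intro t
    have h1 := h (t + 1) (Nat.le_add_left 1 t)
    simp only [Nat.add_sub_cancel] at h1
    have : ((t + 1 : ℕ) : ℝ) = (t : ℝ) + 1 := by push_cast; ring
    rw [this] at h1
    simp only [hydef, hcdef, h1]
    ring
  rw [NormedAddCommGroup.tendsto_nhds_zero]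
  intro ε hε
  -- it suffices to show eventually |y t| ≤ ε/2
  have hε2 : 0 < ε / 2 := by linarith
  set ε' : ℝ := ε / 2 with hε'def
  set K : ℝ := ε' * a / 4 with hKdef
  have hK : 0 < K := by positivity
  -- choose T with the eventual conditions
  have hevA : ∀ᶠ t in atTop, |aseq t - a| < a / 2 := by
    have h0 : Tendsto (fun t => |aseq t - a|) atTop (nhds 0) := by
      have := (hA.sub_const a).abs; simpa using this
    exact h0.eventually_lt_const (by linarith)
  have hevC : ∀ᶠ t in atTop, |c t| ≤ K := by
    have h0 : Tendsto (fun t => |c t|) atTop (nhds 0) := by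
      have := hcz.abs; simpa using this
    filter_upwards [h0.eventually_lt_const hK] with t ht using ht.le
  have hevN : ∀ᶠ t : ℕ in atTop, 2 * a ≤ (t : ℝ) :=
    tendsto_natCast_atTop_atTop.eventually_ge_atTop (2 * a)
  obtain ⟨T, hT⟩ := (hevA.and (hevC.and hevN)).exists_forall_of_atTop
  -- key one-step inequality
  have key : ∀ t : ℕ, T ≤ t →
      |y (t + 1)| ≤ max ε' (|y t| - K / ((t : ℝ) + 1)) := by
    intro t ht
    have hs : T ≤ t + 1 := le_trans ht (Nat.le_succ t)
    obtain ⟨h1, h2, h3⟩ := hT (t + 1) hs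
    have hcast : ((t + 1 : ℕ) : ℝ) = (t : ℝ) + 1 := by push_cast; ring
    rw [hcast] at h3
    set s : ℝ := (t : ℝ) + 1 with hsdef
    have hspos : 0 < s := by positivity
    have ha1 : a / 2 ≤ aseq (t + 1) := by
      have := abs_lt.mp h1; linarith [this.1]
    have ha2 : aseq (t + 1) ≤ 3 * a / 2 := by
      have := abs_lt.mp h1; linarith [this.2]
    have hcoef0 : 0 ≤ 1 - aseq (t + 1) / s := by
      rw [sub_nonneg, div_le_one hspos]; linarith
    have hcoef1 : 1 - aseq (t + 1) / s ≤ 1 - a / (2 * s) := by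
      have : a / (2 * s) ≤ aseq (t + 1) / s := by
        rw [div_le_div_iff₀ (by positivity) hspos]
        nlinarith
      linarith
    have habs : |y (t + 1)| ≤ (1 - aseq (t + 1) / s) * |y t| + K / s := by
      rw [hrec t]
      refine le_trans (abs_add_le _ _) ?_
      have e1 : |(1 - aseq (t + 1) / s) * y t| = (1 - aseq (t + 1) / s) * |y t| := by
        rw [abs_mul, abs_of_nonneg hcoef0]
      have e2 : |c (t + 1) / s| ≤ K / s := by
        rw [abs_div, abs_of_pos hspos]
        gcongr
      linarith [e1 ▸ le_refl ((1 - aseq (t + 1) / s) * |y t|)]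
    have hbound : |y (t + 1)| ≤ (1 - a / (2 * s)) * |y t| + K / s := by
      have := mul_le_mul_of_nonneg_right hcoef1 (abs_nonneg (y t))
      linarith
    have hbound' : s * |y (t + 1)| ≤ (s - a / 2) * |y t| + K := by
      have hmul := mul_le_mul_of_nonneg_left hbound (le_of_lt hspos)
      have e : s * ((1 - a / (2 * s)) * |y t| + K / s) = (s - a / 2) * |y t| + K := by
        field_simp
      linarith [e ▸ hmul]
    have hK' : K = ε' * a / 4 := hKdef
    clear_value s K ε'
    by_cases hyt : |y t| ≤ ε'
    · refine le_max_of_le_left ?_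
      rw [← mul_le_mul_iff_right₀ hspos]
      have hsge : a / 2 ≤ s := by linarith
      have hp := mul_le_mul_of_nonneg_left hyt (show (0:ℝ) ≤ s - a / 2 by linarith)
      have e1 : (s - a / 2) * ε' = s * ε' - a / 2 * ε' := by ring
      have hea : 0 ≤ ε' * a := by positivity
      nlinarith [hbound', hp, e1, hK', hea]
    · push_neg at hyt
      refine le_max_of_le_right ?_
      have e : s * (|y t| - K / s) = s * |y t| - K := by field_simp
      rw [← mul_le_mul_iff_right₀ hspos, e]
      have hp := mul_le_mul_of_nonneg_left hyt.le (show (0:ℝ) ≤ a / 2 by linarith)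
      have e1 : (s - a / 2) * |y t| = s * |y t| - a / 2 * |y t| := by ring
      linarith [hbound', hp, e1, hK']
  -- harmonic sums
  set S : ℕ → ℝ := fun n => ∑ i ∈ Finset.range n, 1 / ((T : ℝ) + i + 1) with hSdef
  have hSstep : ∀ n : ℕ, S (n + 1) = S n + 1 / ((T : ℝ) + n + 1) := by
    intro n; simp [hSdef, Finset.sum_range_succ]
  have hStop : Tendsto S atTop atTop := by
    have hH : Tendsto (fun n : ℕ => ∑ i ∈ Finset.range n, 1 / ((i : ℝ) + 1))
        atTop atTop := by
      have := Real.tendsto_sum_range_one_div_nat_succ_atTop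
      refine this.congr (fun n => ?_)
      refine Finset.sum_congr rfl (fun i _ => ?_)
      push_cast; ring
    have hEq : ∀ n : ℕ, S n =
        (∑ i ∈ Finset.range (T + n), 1 / ((i : ℝ) + 1)) -
        ∑ i ∈ Finset.range T, 1 / ((i : ℝ) + 1) := by
      intro n
      rw [hSdef]
      rw [Finset.sum_range_add]  -- maybe not the name
      simp only [add_sub_cancel_left]
      refine Finset.sum_congr rfl (fun i _ => ?_)
      push_cast; ring
    have hcomp : Tendsto (fun n : ℕ => ∑ i ∈ Finset.range (T + n), 1 / ((i : ℝ) + 1))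
        atTop atTop := hH.comp (tendsto_add_atTop_nat T |>.congr (fun n => by ring_nf))
    have := tendsto_atTop_add_const_right atTop
      (-(∑ i ∈ Finset.range T, 1 / ((i : ℝ) + 1))) hcomp
    refine this.congr (fun n => ?_)
    rw [hEq n]; ring
  -- induction
  have main : ∀ n : ℕ, |y (T + n)| ≤ max ε' (|y T| - K * S n) := by
    intro n
    induction n with
    | zero => simp [hSdef]
    | succ n ih =>
      have hk := key (T + n) (Nat.le_add_right T n)
      have hcast : ((T + n : ℕ) : ℝ) + 1 = (T : ℝ) + n + 1 := by push_cast; ring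
      rw [hcast] at hk
      have : T + n + 1 = T + (n + 1) := by ring
      rw [this] at hk
      refine le_trans hk ?_
      have hKd : 0 < K / ((T : ℝ) + n + 1) := by positivity
      rcases le_max_iff.mp ih with h1 | h2
      · exact max_le (le_max_left _ _) (le_max_of_le_left (by linarith))
      · refine max_le (le_max_left _ _) (le_max_of_le_right ?_)
        rw [hSstep]
        have e : K * (S n + 1 / ((T : ℝ) + n + 1)) = K * S n + K / ((T : ℝ) + n + 1) := by
          ring
        rw [e]; linarith
  -- conclude
  have hbig : ∀ᶠ n : ℕ in atTop, |y T| - K * S n < 0 := by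
    have : Tendsto (fun n => K * S n) atTop atTop :=
      hStop.const_mul_atTop hK
    filter_upwards [this.eventually_gt_atTop (|y T|)] with n hn
    linarith
  obtain ⟨N, hN⟩ := hbig.exists_forall_of_atTop
  rw [eventually_atTop]
  refine ⟨T + N, fun t ht => ?_⟩
  have hTt : T ≤ t := le_trans (Nat.le_add_right T N) ht
  have h1 : t = T + (t - T) := by omega
  have h2 : N ≤ t - T := by omega
  have h3 := main (t - T)
  rw [← h1] at h3
  have h4 := hN (t - T) h2
  have h5 : |y t| ≤ ε' := by
    rcases le_max_iff.mp h3 with h | h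
    · exact h
    · linarith [abs_nonneg (y t)]
  have : ‖y t‖ = |y t| := rfl
  rw [this]
  linarith
end
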